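/- Let x_L < x_R be reals with midpoint M = (x_L+x_R)/2, and let μ be a Borel probability measure on ℝ with finite first moment. Then ∫ |y − x_L| d(T_{x_L,x_R}μ)(y) = ∫ |y − x_L| dμ(y) and ∫ |y − x_R| d(T_{x_L,x_R}μ)(y) = ∫ |y − x_R| dμ(y); that is, the transformation T preserves the expected cost of each of the two agents located at x_L and x_R. -/

import Mathlib

open MeasureTheory

/-- The transformation `T` from the paper: given `x_L < x_R` with midpoint
`M = (x_L+x_R)/2` and a measure `μ`, the transformed measure agrees with `μ` outside
`[x_L, x_R]`, assigns measure zero to `(x_L,M) ∪ (M,x_R)`, and moves the mass `p_ℓ` of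
`(x_L,M)` (with conditional mean `π_ℓ = q_ℓ x_L + (1-q_ℓ) M`) onto the points `x_L` and
`M` with weights `q_ℓ p_ℓ` and `(1-q_ℓ) p_ℓ`, and symmetrically the mass `p_r` of
`(M,x_R)` onto `x_R` and `M`. (When `p_ℓ = 0` the products `q_ℓ p_ℓ` and `(1-q_ℓ) p_ℓ`
vanish, and similarly on the right.) -/
noncomputable def Tmeas (xL xR : ℝ) (μ : Measure ℝ) : Measure ℝ :=
  let M := (xL + xR) / 2
  let pl := (μ (Set.Ioo xL M)).toReal
  let pr := (μ (Set.Ioo M xR)).toReal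
  let πl := (∫ y in Set.Ioo xL M, y ∂μ) / pl
  let πr := (∫ y in Set.Ioo M xR, y ∂μ) / pr
  let ql := (M - πl) / (M - xL)
  let qr := (πr - M) / (xR - M)
  μ.restrict (Set.Iio xL ∪ Set.Ioi xR)
    + (μ {xL} + ENNReal.ofReal (ql * pl)) • Measure.dirac xL
    + (μ {M} + ENNReal.ofReal ((1 - ql) * pl + (1 - qr) * pr)) • Measure.dirac M
    + (μ {xR} + ENNReal.ofReal (qr * pr)) • Measure.dirac xR


lemma integrable_smul_dirac (f : ℝ → ℝ) (hf : Measurable f) {k : ENNReal} (hk : k ≠ ⊤) (a : ℝ) :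
    Integrable f (k • Measure.dirac a) := by
  constructor
  · exact hf.aestronglyMeasurable
  · simp only [HasFiniteIntegral, lintegral_smul_measure]
    rw [lintegral_dirac]
    exact ENNReal.mul_lt_top hk.lt_top ENNReal.coe_lt_top

lemma key (xL M xR : ℝ) (h1 : xL < M) (h2 : M < xR) (μ : Measure ℝ) [IsProbabilityMeasure μ]
    (f : ℝ → ℝ) (hf : Measurable f) (hfi : Integrable f μ) (hid : Integrable (fun y : ℝ => y) μ)
    (c d : ℝ) (hfaff : ∀ y ∈ Set.Icc xL xR, f y = c * y + d) :
    ∫ y, f y ∂(μ.restrict (Set.Iio xL ∪ Set.Ioi xR)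
      + (μ {xL} + ENNReal.ofReal (((M - (∫ y in Set.Ioo xL M, y ∂μ) / (μ (Set.Ioo xL M)).toReal) / (M - xL)) * (μ (Set.Ioo xL M)).toReal)) • Measure.dirac xL
      + (μ {M} + ENNReal.ofReal ((1 - (M - (∫ y in Set.Ioo xL M, y ∂μ) / (μ (Set.Ioo xL M)).toReal) / (M - xL)) * (μ (Set.Ioo xL M)).toReal + (1 - ((∫ y in Set.Ioo M xR, y ∂μ) / (μ (Set.Ioo M xR)).toReal - M) / (xR - M)) * (μ (Set.Ioo M xR)).toReal)) • Measure.dirac M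
      + (μ {xR} + ENNReal.ofReal ((((∫ y in Set.Ioo M xR, y ∂μ) / (μ (Set.Ioo M xR)).toReal - M) / (xR - M)) * (μ (Set.Ioo M xR)).toReal)) • Measure.dirac xR)
    = ∫ y, f y ∂μ := by
  set Il := ∫ y in Set.Ioo xL M, y ∂μ with hIl_def
  set Ir := ∫ y in Set.Ioo M xR, y ∂μ with hIr_def
  set pl := (μ (Set.Ioo xL M)).toReal with hpl_def
  set pr := (μ (Set.Ioo M xR)).toReal with hpr_def
  set ql := (M - Il / pl) / (M - xL) with hql_def
  set qr := (Ir / pr - M) / (xR - M) with hqr_def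
  have hu : ∀ s : Set ℝ, IntegrableOn f s μ := fun s => hfi.integrableOn
  have huid : ∀ s : Set ℝ, IntegrableOn (fun y : ℝ => y) s μ := fun s => hid.integrableOn
  have hconst : ∀ (e : ℝ) (s : Set ℝ), IntegrableOn (fun _ : ℝ => e) s μ :=
    fun e s => integrableOn_const (measure_ne_top μ s)
  -- bounds on Il, Ir
  have hcl : ∀ e : ℝ, ∫ _ in Set.Ioo xL M, e ∂μ = e * pl := by
    intro e; rw [setIntegral_const, smul_eq_mul, mul_comm]; rfl
  have hcr : ∀ e : ℝ, ∫ _ in Set.Ioo M xR, e ∂μ = e * pr := by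
    intro e; rw [setIntegral_const, smul_eq_mul, mul_comm]; rfl
  have hIl_le : Il ≤ M * pl := by
    have := setIntegral_mono_on (huid (Set.Ioo xL M)) (hconst M (Set.Ioo xL M)) measurableSet_Ioo
      (fun y hy => le_of_lt hy.2)
    rwa [hcl] at this
  have hIl_ge : xL * pl ≤ Il := by
    have := setIntegral_mono_on (hconst xL (Set.Ioo xL M)) (huid (Set.Ioo xL M)) measurableSet_Ioo
      (fun y hy => le_of_lt hy.1)
    rwa [hcl] at this
  have hIr_le : Ir ≤ xR * pr := by
    have := setIntegral_mono_on (huid (Set.Ioo M xR)) (hconst xR (Set.Ioo M xR)) measurableSet_Ioo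
      (fun y hy => le_of_lt hy.2)
    rwa [hcr] at this
  have hIr_ge : M * pr ≤ Ir := by
    have := setIntegral_mono_on (hconst M (Set.Ioo M xR)) (huid (Set.Ioo M xR)) measurableSet_Ioo
      (fun y hy => le_of_lt hy.1)
    rwa [hcr] at this
  have hpl_nonneg : (0:ℝ) ≤ pl := ENNReal.toReal_nonneg
  have hpr_nonneg : (0:ℝ) ≤ pr := ENNReal.toReal_nonneg
  have hplzero : pl = 0 → Il = 0 := by
    intro h0
    have hms : μ (Set.Ioo xL M) = 0 := by
      rcases (ENNReal.toReal_eq_zero_iff _).mp (hpl_def ▸ h0) with h|h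
      · exact h
      · exact absurd h (measure_ne_top μ _)
    rw [hIl_def, Measure.restrict_eq_zero.mpr hms, integral_zero_measure]
  have hprzero : pr = 0 → Ir = 0 := by
    intro h0
    have hms : μ (Set.Ioo M xR) = 0 := by
      rcases (ENNReal.toReal_eq_zero_iff _).mp (hpr_def ▸ h0) with h|h
      · exact h
      · exact absurd h (measure_ne_top μ _)
    rw [hIr_def, Measure.restrict_eq_zero.mpr hms, integral_zero_measure]
  -- nonnegativity of the point masses
  have hql01 : pl ≠ 0 → 0 ≤ ql ∧ ql ≤ 1 := by
    intro h0
    have hplpos : 0 < pl := lt_of_le_of_ne hpl_nonneg (Ne.symm h0)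
    constructor
    · apply div_nonneg _ (by linarith : (0:ℝ) ≤ M - xL)
      have : Il / pl ≤ M := (div_le_iff₀ hplpos).mpr (by linarith)
      linarith
    · rw [div_le_one (by linarith : (0:ℝ) < M - xL)]
      have : xL ≤ Il / pl := (le_div_iff₀ hplpos).mpr (by linarith)
      linarith
  have hqr01 : pr ≠ 0 → 0 ≤ qr ∧ qr ≤ 1 := by
    intro h0
    have hprpos : 0 < pr := lt_of_le_of_ne hpr_nonneg (Ne.symm h0)
    constructor
    · apply div_nonneg _ (by linarith : (0:ℝ) ≤ xR - M)
      have : M ≤ Ir / pr := (le_div_iff₀ hprpos).mpr (by linarith)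
      linarith
    · rw [div_le_one (by linarith : (0:ℝ) < xR - M)]
      have : Ir / pr ≤ xR := (div_le_iff₀ hprpos).mpr (by linarith)
      linarith
  have hn1 : 0 ≤ ql * pl := by
    rcases eq_or_ne pl 0 with h0|h0
    · rw [h0, mul_zero]
    · exact mul_nonneg (hql01 h0).1 hpl_nonneg
  have hn2l : 0 ≤ (1 - ql) * pl := by
    rcases eq_or_ne pl 0 with h0|h0
    · rw [h0, mul_zero]
    · exact mul_nonneg (by linarith [(hql01 h0).2]) hpl_nonneg
  have hn2r : 0 ≤ (1 - qr) * pr := by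
    rcases eq_or_ne pr 0 with h0|h0
    · rw [h0, mul_zero]
    · exact mul_nonneg (by linarith [(hqr01 h0).2]) hpr_nonneg
  have hn2 : 0 ≤ (1 - ql) * pl + (1 - qr) * pr := by linarith
  have hn3 : 0 ≤ qr * pr := by
    rcases eq_or_ne pr 0 with h0|h0
    · rw [h0, mul_zero]
    · exact mul_nonneg (hqr01 h0).1 hpr_nonneg
  -- key algebraic identities
  have hkeyl : pl * (ql * xL + (1 - ql) * M) = Il := by
    rcases eq_or_ne pl 0 with h0|h0
    · rw [h0, hplzero h0]; ring
    · have hMxL : M - xL ≠ 0 := ne_of_gt (by linarith)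
      have e : ql * xL + (1 - ql) * M = Il / pl := by
        rw [hql_def]; field_simp; ring
      rw [e]; field_simp
  have hkeyr : pr * (qr * xR + (1 - qr) * M) = Ir := by
    rcases eq_or_ne pr 0 with h0|h0
    · rw [h0, hprzero h0]; ring
    · have hMxR : xR - M ≠ 0 := ne_of_gt (by linarith)
      have e : qr * xR + (1 - qr) * M = Ir / pr := by
        rw [hqr_def]; field_simp; ring
      rw [e]; field_simp
  -- partition of Icc
  have hpart : Set.Icc xL xR =
      {xL} ∪ (Set.Ioo xL M ∪ ({M} ∪ (Set.Ioo M xR ∪ {xR}))) := by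
    ext y
    simp only [Set.mem_Icc, Set.mem_union, Set.mem_singleton_iff, Set.mem_Ioo]
    constructor
    · rintro ⟨ha, hb⟩
      rcases eq_or_lt_of_le ha with he|ha'
      · exact Or.inl he.symm
      rcases eq_or_lt_of_le hb with he|hb'
      · exact Or.inr (Or.inr (Or.inr (Or.inr he)))
      rcases lt_trichotomy y M with hm|hm|hm
      · exact Or.inr (Or.inl ⟨ha', hm⟩)
      · exact Or.inr (Or.inr (Or.inl hm))
      · exact Or.inr (Or.inr (Or.inr (Or.inl ⟨hm, hb'⟩)))
    · rintro (rfl | ⟨u,v⟩ | rfl | ⟨u,v⟩ | rfl) <;> constructor <;> linarith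
  -- disjointness
  have d1 : Disjoint ({xL} : Set ℝ) (Set.Ioo xL M ∪ ({M} ∪ (Set.Ioo M xR ∪ {xR}))) := by
    rw [Set.disjoint_left]
    intro y hy hmem
    simp only [Set.mem_singleton_iff] at hy
    subst hy
    simp only [Set.mem_union, Set.mem_Ioo, Set.mem_singleton_iff] at hmem
    rcases hmem with ⟨a,b⟩|(a|(⟨a,b⟩|a)) <;> linarith
  have d2 : Disjoint (Set.Ioo xL M) ({M} ∪ (Set.Ioo M xR ∪ {xR})) := by
    rw [Set.disjoint_left]
    intro y hy hmem
    simp only [Set.mem_Ioo] at hy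
    simp only [Set.mem_union, Set.mem_Ioo, Set.mem_singleton_iff] at hmem
    rcases hmem with a|(⟨a,b⟩|a) <;> [skip; skip; skip] <;>
      first
      | (subst a; linarith [hy.1, hy.2])
      | linarith [hy.1, hy.2]
  have d3 : Disjoint ({M} : Set ℝ) (Set.Ioo M xR ∪ {xR}) := by
    rw [Set.disjoint_left]
    intro y hy hmem
    simp only [Set.mem_singleton_iff] at hy
    subst hy
    simp only [Set.mem_union, Set.mem_Ioo, Set.mem_singleton_iff] at hmem
    rcases hmem with ⟨a,b⟩|a <;> linarith
  have d4 : Disjoint (Set.Ioo M xR) ({xR} : Set ℝ) := by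
    rw [Set.disjoint_left]
    intro y hy hmem
    simp only [Set.mem_Ioo] at hy
    simp only [Set.mem_singleton_iff] at hmem
    linarith [hy.2, hmem.ge]
  -- measurability
  have m1 : MeasurableSet (Set.Ioo xL M ∪ ({M} ∪ (Set.Ioo M xR ∪ {xR}))) :=
    measurableSet_Ioo.union ((measurableSet_singleton M).union
      (measurableSet_Ioo.union (measurableSet_singleton xR)))
  have m2 : MeasurableSet ({M} ∪ (Set.Ioo M xR ∪ {xR}) : Set ℝ) :=
    (measurableSet_singleton M).union (measurableSet_Ioo.union (measurableSet_singleton xR))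
  have m3 : MeasurableSet (Set.Ioo M xR ∪ {xR} : Set ℝ) :=
    measurableSet_Ioo.union (measurableSet_singleton xR)
  have m4 : MeasurableSet ({xR} : Set ℝ) := measurableSet_singleton xR
  -- singleton integrals
  have hsing : ∀ a : ℝ, ∫ y in ({a} : Set ℝ), f y ∂μ = (μ {a}).toReal * f a := by
    intro a
    rw [Measure.restrict_singleton, integral_smul_measure, integral_dirac, smul_eq_mul]
  -- interval integrals
  have hIoo_l : ∫ y in Set.Ioo xL M, f y ∂μ = c * Il + d * pl := by
    have heq : Set.EqOn f (fun y => c * y + d) (Set.Ioo xL M) :=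
      fun y hy => hfaff y ⟨le_of_lt hy.1, by linarith [hy.2]⟩
    rw [setIntegral_congr_fun measurableSet_Ioo heq,
      integral_add ((huid _).const_mul c) (hconst d _), integral_const_mul c, hcl, hIl_def]
  have hIoo_r : ∫ y in Set.Ioo M xR, f y ∂μ = c * Ir + d * pr := by
    have heq : Set.EqOn f (fun y => c * y + d) (Set.Ioo M xR) :=
      fun y hy => hfaff y ⟨by linarith [hy.1], le_of_lt hy.2⟩
    rw [setIntegral_congr_fun measurableSet_Ioo heq,
      integral_add ((huid _).const_mul c) (hconst d _), integral_const_mul c, hcr, hIr_def]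
  -- decomposition of RHS
  have hs_meas : MeasurableSet (Set.Iio xL ∪ Set.Ioi xR) :=
    measurableSet_Iio.union measurableSet_Ioi
  have hcompl : (Set.Iio xL ∪ Set.Ioi xR)ᶜ = Set.Icc xL xR := by
    rw [Set.compl_union, Set.compl_Iio, Set.compl_Ioi, Set.Ici_inter_Iic]
  -- integrability wrt the dirac pieces
  have hkne : ∀ (m : ENNReal) (r : ℝ), m ≠ ⊤ → m + ENNReal.ofReal r ≠ ⊤ :=
    fun m r hm => ENNReal.add_ne_top.mpr ⟨hm, ENNReal.ofReal_ne_top⟩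
  have hA : Integrable f (μ.restrict (Set.Iio xL ∪ Set.Ioi xR)) := hfi.integrableOn
  have hB : Integrable f ((μ {xL} + ENNReal.ofReal (ql * pl)) • Measure.dirac xL) :=
    integrable_smul_dirac f hf (hkne _ _ (measure_ne_top μ _)) xL
  have hC : Integrable f ((μ {M} + ENNReal.ofReal ((1 - ql) * pl + (1 - qr) * pr)) • Measure.dirac M) :=
    integrable_smul_dirac f hf (hkne _ _ (measure_ne_top μ _)) M
  have hD : Integrable f ((μ {xR} + ENNReal.ofReal (qr * pr)) • Measure.dirac xR) :=
    integrable_smul_dirac f hf (hkne _ _ (measure_ne_top μ _)) xR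
  rw [integral_add_measure ((hA.add_measure hB).add_measure hC) hD,
    integral_add_measure (hA.add_measure hB) hC, integral_add_measure hA hB,
    integral_smul_measure, integral_smul_measure, integral_smul_measure,
    integral_dirac, integral_dirac, integral_dirac,
    ENNReal.toReal_add (measure_ne_top μ _) ENNReal.ofReal_ne_top,
    ENNReal.toReal_add (measure_ne_top μ _) ENNReal.ofReal_ne_top,
    ENNReal.toReal_add (measure_ne_top μ _) ENNReal.ofReal_ne_top,
    ENNReal.toReal_ofReal hn1, ENNReal.toReal_ofReal hn2, ENNReal.toReal_ofReal hn3,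
    ← integral_add_compl hs_meas hfi, hcompl, hpart,
    setIntegral_union d1 m1 (hu _) (hu _), setIntegral_union d2 m2 (hu _) (hu _),
    setIntegral_union d3 m3 (hu _) (hu _), setIntegral_union d4 m4 (hu _) (hu _),
    hsing xL, hsing M, hsing xR, hIoo_l, hIoo_r,
    hfaff xL ⟨le_refl _, by linarith⟩, hfaff M ⟨by linarith, by linarith⟩,
    hfaff xR ⟨by linarith, le_refl _⟩]
  simp only [smul_eq_mul]
  linear_combination c * hkeyl + c * hkeyr

/-- the transformation `T` preserves the expected cost of each of the two
agents located at `x_L` and `x_R`. -/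
theorem stmt3 (xL xR : ℝ) (h : xL < xR) (μ : Measure ℝ)
    (hprob : IsProbabilityMeasure μ) (hmom : Integrable (fun y => |y|) μ) :
    (∫ y, |y - xL| ∂(Tmeas xL xR μ) = ∫ y, |y - xL| ∂μ) ∧
    (∫ y, |y - xR| ∂(Tmeas xL xR μ) = ∫ y, |y - xR| ∂μ) := by
  haveI := hprob
  have h1 : xL < (xL + xR) / 2 := by linarith
  have h2 : (xL + xR) / 2 < xR := by linarith
  have hid : Integrable (fun y : ℝ => y) μ :=
    (integrable_norm_iff measurable_id.aestronglyMeasurable).mp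
      (by simpa [Real.norm_eq_abs] using hmom)
  constructor
  · exact key xL ((xL + xR) / 2) xR h1 h2 μ (fun y => |y - xL|)
      ((measurable_id.sub measurable_const).abs)
      ((hid.sub (integrable_const xL)).abs) hid 1 (-xL)
      (fun y hy => by show |y - xL| = _; rw [abs_of_nonneg (by linarith [hy.1] : (0:ℝ) ≤ y - xL)]; ring)
  · exact key xL ((xL + xR) / 2) xR h1 h2 μ (fun y => |y - xR|)
      ((measurable_id.sub measurable_const).abs)
      ((hid.sub (integrable_const xR)).abs) hid (-1) xR
      (fun y hy => by show |y - xR| = _; rw [abs_of_nonpos (by linarith [hy.2] : y - xR ≤ (0:ℝ))]; ring)
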